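/- Suppose Assumptions TI, CONT, M0, M1 and RA (random assignment) hold, P(G=g, R=r) > 0 for all (g,r) ∈ {0,1}², and μ₁₀(U₀), μ₁₀(U₁), μ₁₁(U₀), μ₁₁(U₁) are all P-integrable. Then the average treatment effect for the study population is identified: E[Y₁(1) − Y₁(0)] = P(R=1|G=1)·E[Y₁ | G=1, R=1] + P(R=0|G=1)·E[F_{Y₁|G=1,R=1}^{-1}(F_{Y₀|G=1,R=1}(Y₀)) | G=1, R=0] − P(R=1|G=0)·E[Y₁ | G=0, R=1] − P(R=0|G=0)·E[F_{Y₁|G=0,R=1}^{-1}(F_{Y₀|G=0,R=1}(Y₀)) | G=0, R=0]. (Proposition 2: identification of the ATE under random assignment.) -/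

import Mathlib

open MeasureTheory ProbabilityTheory

/-- Conditional CDF of `X` given the event `A`: `F_{X|A}(y) = P(X ≤ y | A)`. -/
noncomputable def cCDF {Ω : Type*} [MeasurableSpace Ω] (P : Measure Ω) (A : Set Ω)
    (X : Ω → ℝ) (y : ℝ) : ℝ :=
  ((P[|A]) {ω | X ω ≤ y}).toReal

/-- Generalized inverse `F⁻¹(q) = inf {y ∈ ℝ : F(y) ≥ q}`. -/
noncomputable def ginv (F : ℝ → ℝ) (q : ℝ) : ℝ :=
  sInf {y : ℝ | q ≤ F y}

/-- Conditional expectation of `X` given the event `A`: `E[X·1_A]/P(A)`. -/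
noncomputable def cExp {Ω : Type*} [MeasurableSpace Ω] (P : Measure Ω) (A : Set Ω)
    (X : Ω → ℝ) : ℝ :=
  (∫ ω in A, X ω ∂P) / (P A).toReal

/-- Conditional probability of `B` given `A`: `P(B|A) = P(B ∩ A)/P(A)`. -/
noncomputable def condProb {Ω : Type*} [MeasurableSpace Ω] (P : Measure Ω)
    (A B : Set Ω) : ℝ :=
  (P (B ∩ A)).toReal / (P A).toReal

section CicAux
variable {Ω : Type*} [MeasurableSpace Ω] (P : Measure Ω)

/-- cCDF only depends on values of `X` on `A`. -/
lemma cCDF_congr {A : Set Ω} (hA : MeasurableSet A) {X X' : Ω → ℝ}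
    (h : ∀ ω ∈ A, X ω = X' ω) : cCDF P A X = cCDF P A X' := by
  funext y
  unfold cCDF
  rw [cond_apply hA, cond_apply hA]
  have : A ∩ {ω | X ω ≤ y} = A ∩ {ω | X' ω ≤ y} := by
    ext ω
    simp only [Set.mem_inter_iff, Set.mem_setOf_eq]
    exact and_congr_right fun hω => by rw [h ω hω]
  rw [this]

/-- composing with a strictly monotone map. -/
lemma cCDF_comp_strictMono {A : Set Ω} {U : Ω → ℝ} {f : ℝ → ℝ} (hf : StrictMono f) (u : ℝ) :
    cCDF P A (fun ω => f (U ω)) (f u) = cCDF P A U u := by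
  unfold cCDF
  congr 1
  congr 1
  ext ω
  simp [hf.le_iff_le]

/-- cCDF via the pushforward. -/
lemma cCDF_eq_map {A : Set Ω} {U : Ω → ℝ} (hU : Measurable U) (y : ℝ) :
    cCDF P A U y = (((P[|A]).map U) (Set.Iic y)).toReal := by
  unfold cCDF
  rw [Measure.map_apply hU measurableSet_Iic]
  rfl

lemma cCDF_mono {A : Set Ω} (hA : MeasurableSet A) (hPA : P A ≠ 0) [IsFiniteMeasure P]
    {X : Ω → ℝ} : Monotone (cCDF P A X) := by
  have : IsProbabilityMeasure (P[|A]) := cond_isProbabilityMeasure hPA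
  intro a b hab
  unfold cCDF
  exact ENNReal.toReal_mono (measure_ne_top _ _)
    (measure_mono fun ω hω => le_trans hω hab)

/-- key generalized-inverse identity. -/
lemma ginv_cCDF {A : Set Ω} (hA : MeasurableSet A) (hPA : P A ≠ 0) [IsFiniteMeasure P]
    {U : Ω → ℝ} {f : ℝ → ℝ} (hfc : Continuous f) (hfm : StrictMono f)
    (hF : StrictMono (cCDF P A U)) (u : ℝ) :
    ginv (cCDF P A (fun ω => f (U ω))) (cCDF P A U u) = f u := by
  have hiff : ∀ y, cCDF P A U u ≤ cCDF P A (fun ω => f (U ω)) y ↔ f u ≤ y := by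
    intro y
    constructor
    · intro hy
      by_contra hlt
      push_neg at hlt
      -- show cCDF P A (f ∘ U) y < cCDF P A U u
      have : cCDF P A (fun ω => f (U ω)) y < cCDF P A U u := by
        rcases Set.eq_empty_or_nonempty {t : ℝ | f t ≤ y} with hS | hS
        · have h0 : cCDF P A (fun ω => f (U ω)) y = 0 := by
            unfold cCDF
            have : {ω | f (U ω) ≤ y} = ∅ := by
              ext ω; simp only [Set.mem_setOf_eq, Set.mem_empty_iff_false, iff_false]
              intro hc
              exact Set.eq_empty_iff_forall_notMem.mp hS (U ω) hc
            rw [this]; simp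
          rw [h0]
          have h1 : cCDF P A U (u - 1) < cCDF P A U u := hF (by linarith)
          have h2 : 0 ≤ cCDF P A U (u - 1) := ENNReal.toReal_nonneg
          linarith
        · have hbdd : BddAbove {t : ℝ | f t ≤ y} := by
            refine ⟨u, fun t ht => ?_⟩
            by_contra hut
            push_neg at hut
            exact absurd (lt_of_le_of_lt (le_trans (hfm hut).le ht) hlt) (lt_irrefl _)
          have hcl : IsClosed {t : ℝ | f t ≤ y} := isClosed_le hfc continuous_const
          set x := sSup {t : ℝ | f t ≤ y} with hx
          have hxmem : f x ≤ y := hcl.csSup_mem hS hbdd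
          have hxu : x < u := by
            by_contra hxu
            push_neg at hxu
            exact absurd (lt_of_le_of_lt (hfm.monotone hxu) (lt_of_le_of_lt hxmem hlt))
              (lt_irrefl _)
          have hset : {ω | f (U ω) ≤ y} = {ω | U ω ≤ x} := by
            ext ω
            simp only [Set.mem_setOf_eq]
            constructor
            · intro h; exact le_csSup hbdd h
            · intro h; exact le_trans (hfm.monotone h) hxmem
          have : cCDF P A (fun ω => f (U ω)) y = cCDF P A U x := by
            unfold cCDF; rw [hset]
          rw [this]
          exact hF hxu
      linarith
    · intro hy
      have h1 : cCDF P A (fun ω => f (U ω)) (f u) = cCDF P A U u :=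
        cCDF_comp_strictMono P hfm u
      calc cCDF P A U u = cCDF P A (fun ω => f (U ω)) (f u) := h1.symm
        _ ≤ cCDF P A (fun ω => f (U ω)) y := cCDF_mono P hA hPA hy
  unfold ginv
  have : {y : ℝ | cCDF P A U u ≤ cCDF P A (fun ω => f (U ω)) y} = Set.Ici (f u) := by
    ext y; simpa using hiff y
  rw [this, csInf_Ici]

lemma setIntegral_eq_cond {A : Set Ω} (hPA : P A ≠ 0) [IsFiniteMeasure P] (f : Ω → ℝ) :
    ∫ ω in A, f ω ∂P = (P A).toReal * ∫ ω, f ω ∂(P[|A]) := by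
  rw [ProbabilityTheory.cond, integral_smul_measure, ENNReal.toReal_inv, smul_eq_mul, ← mul_assoc,
    mul_inv_cancel₀, one_mul]
  exact ENNReal.toReal_ne_zero.mpr ⟨hPA, measure_ne_top _ _⟩

lemma setIntegral_comp_eq {A : Set Ω} (hPA : P A ≠ 0) [IsFiniteMeasure P]
    {U V : Ω → ℝ} (hU : Measurable U) (hV : Measurable V)
    (hmap : (P[|A]).map U = (P[|A]).map V) {f : ℝ → ℝ} (hf : Continuous f) :
    ∫ ω in A, f (U ω) ∂P = ∫ ω in A, f (V ω) ∂P := by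
  rw [setIntegral_eq_cond P hPA, setIntegral_eq_cond P hPA]
  congr 1
  rw [← integral_map hU.aemeasurable hf.aestronglyMeasurable,
      ← integral_map hV.aemeasurable hf.aestronglyMeasurable, hmap]

lemma setIntegral_indicator_indep {X : Ω → Bool} (hX : Measurable X) {Y : Ω → ℝ}
    (hY : AEStronglyMeasurable Y P) [IsProbabilityMeasure P]
    (g : Bool)
    (hind : IndepFun (fun ω => if X ω = g then (1:ℝ) else 0) Y P) :
    ∫ ω in {ω | X ω = g}, Y ω ∂P = (P {ω | X ω = g}).toReal * ∫ ω, Y ω ∂P := by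
  have hmeas : MeasurableSet {ω | X ω = g} := hX (MeasurableSet.singleton g)
  have hφ : Measurable (fun ω => if X ω = g then (1:ℝ) else 0) :=
    (measurable_from_top (f := fun b : Bool => if b = g then (1:ℝ) else 0)).comp hX
  have h1 : ∫ ω in {ω | X ω = g}, Y ω ∂P
      = ∫ ω, (if X ω = g then (1:ℝ) else 0) * Y ω ∂P := by
    rw [← integral_indicator hmeas]
    congr 1; funext ω
    by_cases h : X ω = g <;> simp [Set.indicator_apply, h]
  have h2 : ∫ ω, (if X ω = g then (1:ℝ) else 0) ∂P = (P {ω | X ω = g}).toReal := by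
    rw [show (fun ω => if X ω = g then (1:ℝ) else 0)
        = Set.indicator {ω | X ω = g} (fun _ => 1) from by
      funext ω; by_cases h : X ω = g <;> simp [Set.indicator_apply, h]]
    rw [integral_indicator hmeas]
    simp
    rfl
  rw [h1, ← h2]
  exact hind.integral_fun_mul_eq_mul_integral hφ.aestronglyMeasurable hY

lemma measSet_GR {G R : Ω → Bool} (hG : Measurable G) (hR : Measurable R) (g r : Bool) :
    MeasurableSet {ω | G ω = g ∧ R ω = r} := by
  have : {ω | G ω = g ∧ R ω = r} = G ⁻¹' {g} ∩ R ⁻¹' {r} := by ext ω; simp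
  rw [this]
  exact (hG (MeasurableSet.singleton g)).inter (hR (MeasurableSet.singleton r))

lemma key (P : Measure Ω) [IsProbabilityMeasure P]
    (U₀ U₁ : Ω → ℝ) (G R : Ω → Bool)
    (hU₀ : Measurable U₀) (hU₁ : Measurable U₁) (hG : Measurable G) (hR : Measurable R)
    (f μ00 : ℝ → ℝ) (Y0 Y1 : Ω → ℝ) (g : Bool)
    (hY0 : ∀ ω, Y0 ω = μ00 (U₀ ω))
    (hY1g : ∀ ω, G ω = g → Y1 ω = f (U₁ ω))
    (hTI : ∀ r : Bool,
      (P[|{ω | G ω = g ∧ R ω = r}]).map U₀ = (P[|{ω | G ω = g ∧ R ω = r}]).map U₁)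
    (hFmono : StrictMono (cCDF P {ω | G ω = g ∧ R ω = true} U₁))
    (hμ00 : StrictMono μ00) (hfc : Continuous f) (hfm : StrictMono f)
    (hpos : ∀ r : Bool, P {ω | G ω = g ∧ R ω = r} ≠ 0)
    (hind : IndepFun (fun ω => if G ω = g then (1:ℝ) else 0) (fun ω => f (U₁ ω)) P)
    (hInt : Integrable (fun ω => f (U₁ ω)) P) :
    condProb P {ω | G ω = g} {ω | R ω = true}
        * cExp P {ω | G ω = g ∧ R ω = true} Y1
      + condProb P {ω | G ω = g} {ω | R ω = false}
        * cExp P {ω | G ω = g ∧ R ω = false}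
            (fun ω => ginv (cCDF P {ω | G ω = g ∧ R ω = true} Y1)
              (cCDF P {ω | G ω = g ∧ R ω = true} Y0 (Y0 ω)))
      = ∫ ω, f (U₁ ω) ∂P := by
  set A₁ := {ω | G ω = g ∧ R ω = true} with hA₁def
  set A₀ := {ω | G ω = g ∧ R ω = false} with hA₀def
  have hA₁ : MeasurableSet A₁ := measSet_GR hG hR g true
  have hA₀ : MeasurableSet A₀ := measSet_GR hG hR g false
  -- the transform equals f ∘ U₀ pointwise
  have htrans : ∀ ω, ginv (cCDF P A₁ Y1) (cCDF P A₁ Y0 (Y0 ω)) = f (U₀ ω) := by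
    intro ω
    have e0 : cCDF P A₁ Y0 = cCDF P A₁ (fun ω => μ00 (U₀ ω)) := by
      rw [show Y0 = fun ω => μ00 (U₀ ω) from funext hY0]
    have e1 : cCDF P A₁ Y1 = cCDF P A₁ (fun ω => f (U₁ ω)) :=
      cCDF_congr P hA₁ (fun ω hω => hY1g ω hω.1)
    have e2 : cCDF P A₁ U₀ = cCDF P A₁ U₁ := by
      funext y
      rw [cCDF_eq_map P hU₀ y, cCDF_eq_map P hU₁ y, hTI true]
    rw [e0, e1, hY0 ω, cCDF_comp_strictMono P hμ00 (U₀ ω), e2]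
    exact ginv_cCDF P hA₁ (hpos true) hfc hfm hFmono (U₀ ω)
  -- cExp of observed Y1 on A₁
  have eY1 : cExp P A₁ Y1 = cExp P A₁ (fun ω => f (U₁ ω)) := by
    unfold cExp
    rw [setIntegral_congr_fun hA₁ (fun ω hω => hY1g ω hω.1)]
  -- cExp of transform on A₀
  have eT : cExp P A₀
      (fun ω => ginv (cCDF P A₁ Y1) (cCDF P A₁ Y0 (Y0 ω)))
      = cExp P A₀ (fun ω => f (U₁ ω)) := by
    unfold cExp
    congr 1
    rw [setIntegral_congr_fun hA₀ (fun ω _ => htrans ω)]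
    exact setIntegral_comp_eq P (hpos false) hU₀ hU₁ (hTI false) hfc
  rw [eY1, eT]
  -- positive masses
  have hG1 : P {ω | G ω = g} ≠ 0 := by
    intro h
    exact hpos true (le_antisymm (le_trans (measure_mono fun ω hω => hω.1) h.le) zero_le) 
  have htopG : P {ω | G ω = g} ≠ ⊤ := measure_ne_top _ _
  have hGr : (P {ω | G ω = g}).toReal ≠ 0 := ENNReal.toReal_ne_zero.mpr ⟨hG1, htopG⟩
  have hA₁r : (P A₁).toReal ≠ 0 := ENNReal.toReal_ne_zero.mpr ⟨hpos true, measure_ne_top _ _⟩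
  have hA₀r : (P A₀).toReal ≠ 0 := ENNReal.toReal_ne_zero.mpr ⟨hpos false, measure_ne_top _ _⟩
  -- condProb sets
  have hset1 : {ω | R ω = true} ∩ {ω | G ω = g} = A₁ := by
    ext ω; simp [hA₁def, and_comm]
  have hset0 : {ω | R ω = false} ∩ {ω | G ω = g} = A₀ := by
    ext ω; simp [hA₀def, and_comm]
  -- split of the set integral
  have hsplit : ∫ ω in {ω | G ω = g}, f (U₁ ω) ∂P
      = (∫ ω in A₁, f (U₁ ω) ∂P) + ∫ ω in A₀, f (U₁ ω) ∂P := by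
    have hu : A₁ ∪ A₀ = {ω | G ω = g} := by
      ext ω
      simp only [hA₁def, hA₀def, Set.mem_union, Set.mem_setOf_eq]
      by_cases h : G ω = g <;> by_cases h' : R ω = true <;> simp [h, h']
    have hd : Disjoint A₁ A₀ := by
      rw [Set.disjoint_left]
      intro ω h1 h0
      simp only [hA₁def, hA₀def, Set.mem_setOf_eq] at h1 h0
      rw [h1.2] at h0
      exact absurd h0.2 (by simp)
    rw [← hu, setIntegral_union hd hA₀ hInt.integrableOn hInt.integrableOn]
  -- independence step
  have hindep : ∫ ω in {ω | G ω = g}, f (U₁ ω) ∂P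
      = (P {ω | G ω = g}).toReal * ∫ ω, f (U₁ ω) ∂P :=
    setIntegral_indicator_indep P hG hInt.aestronglyMeasurable g hind
  unfold condProb cExp
  rw [hset1, hset0]
  have e1 : ∀ x y z : ℝ, x ≠ 0 → x / z * (y / x) = y / z := by
    intro x y z hx
    have h : x / z * (y / x) = y * (x / x) / z := by ring
    rw [h, div_self hx, mul_one]
  rw [e1 _ _ _ hA₁r, e1 _ _ _ hA₀r, ← add_div, ← hsplit, hindep,
    mul_comm, mul_div_assoc, div_self hGr, mul_one]
end CicAux

/-- **Proposition 2 (identification of the ATE under random assignment)**: under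
Assumptions TI, CONT, M0, M1 and RA (`G` independent of `(U₀, U₁, R₀, R₁)`), with
`P(G=g, R=r) > 0` for all `(g,r)` and integrability of `μ₁₀(U₀)`, `μ₁₀(U₁)`, `μ₁₁(U₀)`,
`μ₁₁(U₁)`, the average treatment effect for the study population is identified:
`E[Y₁(1) − Y₁(0)] = P(R=1|G=1)·E[Y₁|G=1,R=1]
  + P(R=0|G=1)·E[F_{Y₁|G=1,R=1}⁻¹(F_{Y₀|G=1,R=1}(Y₀))|G=1,R=0]
  − P(R=1|G=0)·E[Y₁|G=0,R=1]
  − P(R=0|G=0)·E[F_{Y₁|G=0,R=1}⁻¹(F_{Y₀|G=0,R=1}(Y₀))|G=0,R=0]`. -/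
theorem cic_prop2_ATE_random_assignment {Ω : Type*} [MeasurableSpace Ω]
    (P : Measure Ω) [IsProbabilityMeasure P]
    (U₀ U₁ : Ω → ℝ) (G R R₀ R₁ : Ω → Bool)
    (hU₀ : Measurable U₀) (hU₁ : Measurable U₁)
    (hG : Measurable G) (hR : Measurable R)
    (hR₀ : Measurable R₀) (hR₁ : Measurable R₁)
    (μ00 μ10 μ11 : ℝ → ℝ)
    -- observed outcomes
    (Y0 Y1 : Ω → ℝ)
    (hY0 : ∀ ω, Y0 ω = μ00 (U₀ ω))
    (hY1 : ∀ ω, Y1 ω = if G ω = true then μ11 (U₁ ω) else μ10 (U₁ ω))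
    -- observed response: R = R₁ on {G=1} and R = R₀ on {G=0}
    (hRdef : ∀ ω, R ω = if G ω = true then R₁ ω else R₀ ω)
    -- Assumption RA (random assignment)
    (hRA : IndepFun G (fun ω => (U₀ ω, U₁ ω, R₀ ω, R₁ ω)) P)
    -- Assumption TI (time invariance)
    (hTI : ∀ g r : Bool, 0 < P {ω | G ω = g ∧ R ω = r} →
      (P[|{ω | G ω = g ∧ R ω = r}]).map U₀ = (P[|{ω | G ω = g ∧ R ω = r}]).map U₁)
    -- Assumption CONT
    (hCONT : ∀ g : Bool, 0 < P {ω | G ω = g ∧ R ω = true} ∧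
      Continuous (cCDF P {ω | G ω = g ∧ R ω = true} U₁) ∧
      StrictMono (cCDF P {ω | G ω = g ∧ R ω = true} U₁))
    -- Assumption M0
    (hμ00c : Continuous μ00) (hμ00 : StrictMono μ00)
    (hμ10c : Continuous μ10) (hμ10 : StrictMono μ10)
    -- Assumption M1
    (hμ11c : Continuous μ11) (hμ11 : StrictMono μ11)
    -- all four treatment-response subpopulations have positive probability
    (hpos : ∀ g r : Bool, 0 < P {ω | G ω = g ∧ R ω = r})
    -- integrability
    (hI1 : Integrable (fun ω => μ10 (U₀ ω)) P)
    (hI2 : Integrable (fun ω => μ10 (U₁ ω)) P)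
    (hI3 : Integrable (fun ω => μ11 (U₀ ω)) P)
    (hI4 : Integrable (fun ω => μ11 (U₁ ω)) P) :
    ∫ ω, (μ11 (U₁ ω) - μ10 (U₁ ω)) ∂P
      = condProb P {ω | G ω = true} {ω | R ω = true}
          * cExp P {ω | G ω = true ∧ R ω = true} Y1
        + condProb P {ω | G ω = true} {ω | R ω = false}
          * cExp P {ω | G ω = true ∧ R ω = false}
              (fun ω => ginv (cCDF P {ω | G ω = true ∧ R ω = true} Y1)
                (cCDF P {ω | G ω = true ∧ R ω = true} Y0 (Y0 ω)))
        - condProb P {ω | G ω = false} {ω | R ω = true}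
          * cExp P {ω | G ω = false ∧ R ω = true} Y1
        - condProb P {ω | G ω = false} {ω | R ω = false}
          * cExp P {ω | G ω = false ∧ R ω = false}
              (fun ω => ginv (cCDF P {ω | G ω = false ∧ R ω = true} Y1)
                (cCDF P {ω | G ω = false ∧ R ω = true} Y0 (Y0 ω))) := by
  have hindf : ∀ (g : Bool) (f : ℝ → ℝ), Continuous f →
      IndepFun (fun ω => if G ω = g then (1:ℝ) else 0) (fun ω => f (U₁ ω)) P := by
    intro g f hf
    have hφ : Measurable (fun b : Bool => if b = g then (1:ℝ) else 0) := measurable_from_top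
    have hψ : Measurable (fun p : ℝ × ℝ × Bool × Bool => f p.2.1) :=
      hf.measurable.comp (measurable_fst.comp measurable_snd)
    exact hRA.comp hφ hψ
  have h1 := key P U₀ U₁ G R hU₀ hU₁ hG hR μ11 μ00 Y0 Y1 true hY0
    (fun ω hω => by rw [hY1 ω, if_pos hω])
    (fun r => hTI true r (hpos true r)) (hCONT true).2.2 hμ00 hμ11c hμ11
    (fun r => (hpos true r).ne') (hindf true μ11 hμ11c) hI4
  have h0 := key P U₀ U₁ G R hU₀ hU₁ hG hR μ10 μ00 Y0 Y1 false hY0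
    (fun ω hω => by rw [hY1 ω, if_neg (by simp [hω])])
    (fun r => hTI false r (hpos false r)) (hCONT false).2.2 hμ00 hμ10c hμ10
    (fun r => (hpos false r).ne') (hindf false μ10 hμ10c) hI2
  rw [integral_sub hI4 hI2]
  linarith [h1, h0]
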